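/- Call a G-valued 1-form a function ω assigning to each pair x ∼ y in P an element ω(x,y) ∈ G with ω(x,x) = id_e and ω(y,x) = ω(x,y)⁻¹. Assume ∼ on P is G-invariant (for every g ∈ G, x ∼ y implies x·g ∼ y·g), every fibre P_a (a ∈ M) is nonempty, and for every pair a ∼ b in M and every x ∈ P_a there exists y ∈ P_b with x ∼ y. Then the assignment sending a connection ∇ to its connection form ω is a bijection from the set of connections onto the set of G-valued 1-forms ω satisfying: (i) ω(x·g, y) = g⁻¹ ∘ ω(x,y) whenever x ∼ y and x·g ∼ y; and (ii) ω(x·g, y·g) = g⁻¹ ∘ ω(x,y) ∘ g for all g ∈ G whenever x ∼ y. -/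

import Mathlib

open CategoryTheory

/-- The principal bundle `P`: arrows of the groupoid `Φ` with domain `e` and codomain
in a set `M` of objects.  For `x : Bdl e M`, `x.1` is the codomain `π x ∈ M` and
`x.2 : e ⟶ x.1` is the arrow itself. -/
def Bdl {Φ : Type*} [Groupoid Φ] (e : Φ) (M : Set Φ) : Type _ :=
  Σ a : M, e ⟶ (a : Φ)

/-- The right action of the group `G = Φ(e,e)` on `P` by precomposition:
`x · g = x ∘ g`. -/
def Bdl.act {Φ : Type*} [Groupoid Φ] {e : Φ} {M : Set Φ}
    (x : Bdl e M) (g : e ⟶ e) : Bdl e M :=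
  ⟨x.1, g ≫ x.2⟩

/-- A connection: to each pair `a ∼ b` in `M` it assigns an arrow `∇(a,b) : b ⟶ a`,
with `∇(a,a) = id` and `∇(b,a) = ∇(a,b)⁻¹`. -/
structure Conn {Φ : Type*} [Groupoid Φ] (e : Φ) (M : Set Φ) (nbM : M → M → Prop) where
  map : ∀ a b : M, nbM a b → ((b : Φ) ⟶ (a : Φ))
  map_refl : ∀ (a : M) (h : nbM a a), map a a h = 𝟙 (a : Φ)
  map_symm : ∀ (a b : M) (h : nbM a b) (h' : nbM b a),
    map b a h' = Groupoid.inv (map a b h)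

/-- The connection form `ω(x,y) = x⁻¹ ∘ ∇(π x, π y) ∘ y ∈ G`
(composition right-to-left; in Lean's diagrammatic order: `y ≫ ∇ ≫ x⁻¹`). -/
def connForm {Φ : Type*} [Groupoid Φ] {e : Φ} {M : Set Φ} {nbM : M → M → Prop}
    (D : Conn e M nbM) (x y : Bdl e M) (h : nbM x.1 y.1) : e ⟶ e :=
  y.2 ≫ D.map x.1 y.1 h ≫ Groupoid.inv x.2

/-- A `G`-valued 1-form: a function assigning to each pair `x ∼ y` in `P` an
element of `G = Φ(e,e)`, with `ω(x,x) = id` and `ω(y,x) = ω(x,y)⁻¹`, and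
satisfying the two conditions:
(i)  `ω(x·g, y) = g⁻¹ ∘ ω(x,y)` whenever `x ∼ y` and `x·g ∼ y`;
(ii) `ω(x·g, y·g) = g⁻¹ ∘ ω(x,y) ∘ g` for all `g ∈ G` whenever `x·g ∼ y·g`. -/
def IsConnectionForm {Φ : Type*} [Groupoid Φ] {e : Φ} {M : Set Φ}
    (nbP : Bdl e M → Bdl e M → Prop)
    (ω : ∀ x y : Bdl e M, nbP x y → (e ⟶ e)) : Prop :=
  (∀ (x : Bdl e M) (h : nbP x x), ω x x h = 𝟙 e) ∧
  (∀ (x y : Bdl e M) (h : nbP x y) (h' : nbP y x),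
    ω y x h' = Groupoid.inv (ω x y h)) ∧
  (∀ (x y : Bdl e M) (g : e ⟶ e) (h : nbP x y) (h' : nbP (x.act g) y),
    ω (x.act g) y h' = ω x y h ≫ Groupoid.inv g) ∧
  (∀ (x y : Bdl e M) (g : e ⟶ e) (h : nbP x y) (h' : nbP (x.act g) (y.act g)),
    ω (x.act g) (y.act g) h' = g ≫ ω x y h ≫ Groupoid.inv g)

/-- Key independence lemma. -/
lemma indep {Φ : Type*} [Groupoid Φ] {e : Φ} {M : Set Φ}
    {nbP : Bdl e M → Bdl e M → Prop}
    (hPsymm : ∀ x y, nbP x y → nbP y x)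
    (hGinv : ∀ (x y : Bdl e M) (g : e ⟶ e), nbP x y → nbP (x.act g) (y.act g))
    {ω : ∀ x y : Bdl e M, nbP x y → (e ⟶ e)} (hω : IsConnectionForm nbP ω)
    {a b : M} (x x' : e ⟶ (a : Φ)) (y y' : e ⟶ (b : Φ))
    (h : nbP ⟨a, x⟩ ⟨b, y⟩) (h' : nbP ⟨a, x'⟩ ⟨b, y'⟩) :
    Groupoid.inv y ≫ ω ⟨a, x⟩ ⟨b, y⟩ h ≫ x
      = Groupoid.inv y' ≫ ω ⟨a, x'⟩ ⟨b, y'⟩ h' ≫ x' := by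
  obtain ⟨hrefl, hsymm, h1, h2⟩ := hω
  obtain ⟨g, rfl⟩ : ∃ g : e ⟶ e, x' = g ≫ x :=
    ⟨x' ≫ Groupoid.inv x, by simp⟩
  obtain ⟨k, rfl⟩ : ∃ k : e ⟶ e, y' = k ≫ g ≫ y :=
    ⟨y' ≫ Groupoid.inv (g ≫ y), by simp⟩
  have hB : nbP ⟨a, g ≫ x⟩ ⟨b, g ≫ y⟩ := hGinv ⟨a, x⟩ ⟨b, y⟩ g h
  have eB : ω ⟨a, g ≫ x⟩ ⟨b, g ≫ y⟩ hB
      = g ≫ ω ⟨a, x⟩ ⟨b, y⟩ h ≫ Groupoid.inv g := h2 ⟨a, x⟩ ⟨b, y⟩ g h hB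
  have hS : nbP ⟨b, g ≫ y⟩ ⟨a, g ≫ x⟩ := hPsymm _ _ hB
  have hS' : nbP ⟨b, k ≫ g ≫ y⟩ ⟨a, g ≫ x⟩ := hPsymm _ _ h'
  have eA : ω ⟨b, k ≫ g ≫ y⟩ ⟨a, g ≫ x⟩ hS'
      = ω ⟨b, g ≫ y⟩ ⟨a, g ≫ x⟩ hS ≫ Groupoid.inv k :=
    h1 ⟨b, g ≫ y⟩ ⟨a, g ≫ x⟩ k hS hS'
  have esym1 : ω ⟨b, g ≫ y⟩ ⟨a, g ≫ x⟩ hS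
      = Groupoid.inv (ω ⟨a, g ≫ x⟩ ⟨b, g ≫ y⟩ hB) := hsymm _ _ hB hS
  have esym2 : ω ⟨a, g ≫ x⟩ ⟨b, k ≫ g ≫ y⟩ h'
      = Groupoid.inv (ω ⟨b, k ≫ g ≫ y⟩ ⟨a, g ≫ x⟩ hS') := hsymm _ _ hS' h'
  rw [esym2, eA, esym1, eB]
  simp [Groupoid.inv_eq_inv]
lemma Conn.ext' {Φ : Type*} [Groupoid Φ] {e : Φ} {M : Set Φ} {nbM : M → M → Prop}
    {D D' : Conn e M nbM} (h : D.map = D'.map) : D = D' := by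
  cases D; cases D'; cases h; rfl

/-- under the stated hypotheses (G-invariance of `∼`, nonempty fibres,
lifting of neighbour pairs), the assignment sending a connection `∇` to its
connection form `ω` is a bijection from the set of connections onto the set of
`G`-valued 1-forms satisfying (i) and (ii): it lands in that set, is injective,
and is surjective onto it. -/
theorem stmt1 {Φ : Type*} [Groupoid Φ] (e : Φ) (M : Set Φ)
    (nbM : M → M → Prop) (nbP : Bdl e M → Bdl e M → Prop)
    (hMrefl : ∀ a, nbM a a) (hMsymm : ∀ a b, nbM a b → nbM b a)
    (hPrefl : ∀ x, nbP x x) (hPsymm : ∀ x y, nbP x y → nbP y x)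
    (hcompat : ∀ x y : Bdl e M, nbP x y → nbM x.1 y.1)
    (hGinv : ∀ (x y : Bdl e M) (g : e ⟶ e), nbP x y → nbP (x.act g) (y.act g))
    (hne : ∀ a : M, Nonempty (e ⟶ (a : Φ)))
    (hsub : ∀ (a b : M), nbM a b → ∀ x : e ⟶ (a : Φ),
      ∃ y : e ⟶ (b : Φ), nbP ⟨a, x⟩ ⟨b, y⟩) :
    (∀ D : Conn e M nbM,
      IsConnectionForm nbP (fun x y h => connForm D x y (hcompat x y h))) ∧
    (∀ D D' : Conn e M nbM,
      (fun x y h => connForm D x y (hcompat x y h)) =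
        (fun x y h => connForm D' x y (hcompat x y h)) → D = D') ∧
    (∀ ω : ∀ x y : Bdl e M, nbP x y → (e ⟶ e), IsConnectionForm nbP ω →
      ∃ D : Conn e M nbM, (fun x y h => connForm D x y (hcompat x y h)) = ω) := by
  refine ⟨?_, ?_, ?_⟩
  · -- connection forms of connections satisfy the axioms
    intro D
    refine ⟨?_, ?_, ?_, ?_⟩
    · intro x h
      simp [connForm, D.map_refl]
    · intro x y h h'
      simp only [connForm, D.map_symm x.1 y.1 (hcompat x y h) (hcompat y x h')]
      simp [Groupoid.inv_eq_inv]
    · intro x y g h h'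
      have : hcompat (x.act g) y h' = hcompat x y h := rfl
      simp only [connForm, Bdl.act, this]
      simp [Groupoid.inv_eq_inv]
    · intro x y g h h'
      have : hcompat (x.act g) (y.act g) h' = hcompat x y h := rfl
      simp only [connForm, Bdl.act, this]
      simp [Groupoid.inv_eq_inv]
  · -- injectivity
    intro D D' hEq
    have key : ∀ (a b : M) (h : nbM a b), D.map a b h = D'.map a b h := by
      intro a b h
      obtain ⟨x⟩ := hne a
      obtain ⟨y, hy⟩ := hsub a b h x
      have e1 := congrFun (congrFun (congrFun hEq ⟨a, x⟩) ⟨b, y⟩) hy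
      simp only [connForm] at e1
      have hpr : hcompat ⟨a, x⟩ ⟨b, y⟩ hy = h := rfl
      rw [hpr] at e1
      calc D.map a b h
          = Groupoid.inv y ≫ (y ≫ D.map a b h ≫ Groupoid.inv x) ≫ x := by
            simp [Groupoid.inv_eq_inv]
        _ = Groupoid.inv y ≫ (y ≫ D'.map a b h ≫ Groupoid.inv x) ≫ x := by rw [e1]
        _ = D'.map a b h := by simp [Groupoid.inv_eq_inv]
    exact Conn.ext' (by funext a b h; exact key a b h)
  · -- surjectivity
    intro ω hω
    set x0 : ∀ a : M, e ⟶ (a : Φ) := fun a => (hne a).some with hx0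
    refine ⟨⟨fun a b h =>
        Groupoid.inv (hsub a b h (x0 a)).choose
          ≫ ω ⟨a, x0 a⟩ ⟨b, (hsub a b h (x0 a)).choose⟩ (hsub a b h (x0 a)).choose_spec
          ≫ x0 a, ?_, ?_⟩, ?_⟩
    · intro a h
      rw [indep hPsymm hGinv hω (x0 a) (x0 a) _ (x0 a)
        (hsub a a h (x0 a)).choose_spec (hPrefl ⟨a, x0 a⟩)]
      rw [hω.1 ⟨a, x0 a⟩ (hPrefl ⟨a, x0 a⟩)]
      simp [Groupoid.inv_eq_inv]
    · intro a b h h'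
      rw [indep hPsymm hGinv hω (x0 b) (hsub a b h (x0 a)).choose _ (x0 a)
        (hsub b a h' (x0 b)).choose_spec (hPsymm _ _ (hsub a b h (x0 a)).choose_spec)]
      rw [hω.2.1 ⟨a, x0 a⟩ ⟨b, (hsub a b h (x0 a)).choose⟩ (hsub a b h (x0 a)).choose_spec
        (hPsymm _ _ (hsub a b h (x0 a)).choose_spec)]
      simp [Groupoid.inv_eq_inv]
    · funext x y h
      show connForm _ x y (hcompat x y h) = ω x y h
      have hm : nbM x.1 y.1 := hcompat x y h
      have hx : (⟨x.1, x.2⟩ : Bdl e M) = x := rfl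
      have e2 : Groupoid.inv (hsub x.1 y.1 hm (x0 x.1)).choose
          ≫ ω ⟨x.1, x0 x.1⟩ ⟨y.1, (hsub x.1 y.1 hm (x0 x.1)).choose⟩
            (hsub x.1 y.1 hm (x0 x.1)).choose_spec ≫ x0 x.1
          = Groupoid.inv y.2 ≫ ω ⟨x.1, x.2⟩ ⟨y.1, y.2⟩ h ≫ x.2 :=
        indep hPsymm hGinv hω (x0 x.1) x.2 _ y.2 (hsub x.1 y.1 hm (x0 x.1)).choose_spec h
      simp only [connForm, e2]
      simp [Groupoid.inv_eq_inv]
      rfl
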